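/- Let T, S ∈ M_n(ℂ) be positive definite Hermitian matrices and suppose there are positive reals m ≤ m' < M' ≤ M with m·I ≤ T ≤ m'·I and M'·I ≤ S ≤ M·I in the Löwner order. Let 0 ≤ ν < κ ≤ 1, set h = M'/m', r = min{ν/κ, 1 − ν/κ}, R = max{ν/κ, 1 − ν/κ} and r' = min{2r, 1 − 2r}. Then, in the Löwner order, H_0(T,S) − (ν/κ)·(H_0(T,S) − H_κ(T,S)) ≤ K(h^{κ/2}, 2)^{−r'} · H_ν(T,S) + R·(H_κ(T,S) + H_0(T,S) − 2·H_{κ/2}(T,S)). -/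

import Mathlib

open scoped ComplexOrder

/-- Matrix power of a (Hermitian) matrix via the continuous functional calculus:
`t ↦ t ^ α` is applied to the eigenvalues. -/
noncomputable def mpow {n : ℕ} (T : Matrix (Fin n) (Fin n) ℂ) (α : ℝ) :
    Matrix (Fin n) (Fin n) ℂ :=
  cfc (fun x : ℝ => x ^ α) T

/-- The κ-weighted geometric mean `T ♯_κ S = T^(1/2) (T^(-1/2) S T^(-1/2))^κ T^(1/2)`. -/
noncomputable def geomMean {n : ℕ} (T S : Matrix (Fin n) (Fin n) ℂ) (κ : ℝ) :
    Matrix (Fin n) (Fin n) ℂ :=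
  mpow T (1 / 2) * mpow (mpow T (-(1 / 2)) * S * mpow T (-(1 / 2))) κ * mpow T (1 / 2)

/-- The operator Heinz mean `H_κ(T,S) = (T ♯_κ S + T ♯_{1-κ} S)/2`. -/
noncomputable def opHeinz {n : ℕ} (κ : ℝ) (T S : Matrix (Fin n) (Fin n) ℂ) :
    Matrix (Fin n) (Fin n) ℂ :=
  (2⁻¹ : ℝ) • (geomMean T S κ + geomMean T S (1 - κ))

/-- The Löwner order: `A ≤ B` iff `B - A` is positive semidefinite. -/
def LoewnerLE {n : ℕ} (A B : Matrix (Fin n) (Fin n) ℂ) : Prop := (B - A).PosSemidef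

/-- The Kantorovich constant `K(t,2) = (t+1)^2/(4t)`. -/
noncomputable def kantorovich (t : ℝ) : ℝ := (t + 1) ^ 2 / (4 * t)

namespace Aux

section Scalar


lemma bernoulli_neg {p v : ℝ} (hp0 : 0 ≤ p) (hp1 : p ≤ 1) (hv : 0 < v) :
    1 - p * (v - 1) ≤ v ^ (-p) := by
  rcases le_or_gt (1 - p * (v - 1)) 0 with hz | hz
  · exact hz.trans (Real.rpow_pos_of_pos hv _).le
  · have hb : v ^ p ≤ 1 + p * (v - 1) := by
      have := Real.geom_mean_le_arith_mean2_weighted hp0 (by linarith : (0:ℝ) ≤ 1 - p)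
        hv.le zero_le_one (by ring)
      simpa [Real.one_rpow] using this.trans_eq (by ring)
    rw [Real.rpow_neg hv.le, ← one_div, le_div_iff₀ (Real.rpow_pos_of_pos hv _)]
    calc (1 - p * (v - 1)) * v ^ p ≤ (1 - p * (v - 1)) * (1 + p * (v - 1)) :=
          mul_le_mul_of_nonneg_left hb hz.le
      _ ≤ 1 := by nlinarith [sq_nonneg (p * (v - 1))]

lemma core_ineq {s u : ℝ} (hs0 : 0 ≤ s) (hs1 : s ≤ 1) (hu : 0 < u) :
    u ^ (1 - s) * ((2 - s) - (1 - s) * u) ≤ (4 * u / (u + 1) ^ 2) ^ min s (1 - s) := by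
  have hv : (0:ℝ) < (u + 1) / 2 := by linarith
  have hrw : ∀ q : ℝ, (4 * u / (u + 1) ^ 2) ^ q = u ^ q / ((u + 1) / 2) ^ (2 * q) := by
    intro q
    have h1 : 4 * u / (u + 1) ^ 2 = u / ((u + 1) / 2) ^ (2:ℕ) := by
      field_simp; ring
    rw [h1, Real.div_rpow hu.le (by positivity), ← Real.rpow_natCast ((u+1)/2) 2,
      ← Real.rpow_mul hv.le]
    norm_num [mul_comm]
  rcases le_total s (1/2) with hs | hs
  · rw [min_eq_left (by linarith)]
    rcases le_or_gt ((2 - s) - (1 - s) * u) 0 with hbr | hbr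
    · have : u ^ (1 - s) * ((2 - s) - (1 - s) * u) ≤ 0 :=
        mul_nonpos_of_nonneg_of_nonpos (Real.rpow_pos_of_pos hu _).le hbr
      exact this.trans (Real.rpow_pos_of_pos (by positivity) _).le
    · rw [hrw s, le_div_iff₀ (Real.rpow_pos_of_pos hv _)]
      have key1 : u ^ (1 - 2*s) * ((u + 1) / 2) ^ (2*s) ≤ (1 - s) * u + s := by
        have := Real.geom_mean_le_arith_mean2_weighted (by linarith : (0:ℝ) ≤ 1 - 2*s)
          (by linarith : (0:ℝ) ≤ 2*s) hu.le hv.le (by ring)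
        calc u ^ (1 - 2*s) * ((u + 1) / 2) ^ (2*s) ≤ (1-2*s) * u + (2*s) * ((u+1)/2) := this
          _ = (1 - s) * u + s := by ring
      have key2 : ((2 - s) - (1 - s) * u) * ((1 - s) * u + s) ≤ 1 := by
        nlinarith [sq_nonneg ((1 - s) * u - (1 - s))]
      have hus : u ^ (1 - s) = u ^ (1 - 2*s) * u ^ s := by
        rw [← Real.rpow_add hu]; ring_nf
      calc u ^ (1 - s) * ((2 - s) - (1 - s) * u) * ((u + 1) / 2) ^ (2 * s)
          = (((2 - s) - (1 - s) * u) * (u ^ (1 - 2*s) * ((u + 1) / 2) ^ (2*s))) * u ^ s := by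
            rw [hus]; ring
        _ ≤ (((2 - s) - (1 - s) * u) * ((1 - s) * u + s)) * u ^ s := by
            apply mul_le_mul_of_nonneg_right _ (Real.rpow_pos_of_pos hu _).le
            exact mul_le_mul_of_nonneg_left key1 hbr.le
        _ ≤ 1 * u ^ s := mul_le_mul_of_nonneg_right key2 (Real.rpow_pos_of_pos hu _).le
        _ = u ^ s := one_mul _
  · rw [min_eq_right (by linarith)]
    set q := 1 - s with hq
    have hq0 : 0 ≤ q := by simp [hq]; linarith
    have hq1 : 2 * q ≤ 1 := by simp [hq]; linarith
    rw [hrw q]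
    have hber : 1 - (2*q) * ((u+1)/2 - 1) ≤ ((u+1)/2) ^ (-(2*q)) :=
      bernoulli_neg (by linarith) hq1 hv
    have h2 : (2 - s) - (1 - s) * u = 1 - (2*q) * ((u+1)/2 - 1) := by simp [hq]; ring
    rw [h2]
    calc u ^ q * (1 - 2*q * ((u+1)/2 - 1)) ≤ u ^ q * ((u+1)/2) ^ (-(2*q)) :=
          mul_le_mul_of_nonneg_left hber (Real.rpow_pos_of_pos hu _).le
      _ = u ^ q / ((u + 1) / 2) ^ (2 * q) := by
          rw [Real.rpow_neg hv.le, ← div_eq_mul_inv]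

lemma kantorovich_pos {t : ℝ} (ht : 0 < t) : 0 < kantorovich t := by
  unfold kantorovich; positivity

lemma kantorovich_inv {t : ℝ} (ht : 0 < t) : kantorovich t⁻¹ = kantorovich t := by
  unfold kantorovich
  rw [div_eq_div_iff (by positivity) (by positivity)]
  field_simp
  ring

lemma kantorovich_mono {a b : ℝ} (ha : 1 ≤ a) (hab : a ≤ b) :
    kantorovich a ≤ kantorovich b := by
  have ha0 : (0:ℝ) < a := by linarith
  have hb0 : (0:ℝ) < b := by linarith
  unfold kantorovich
  rw [div_le_div_iff₀ (by positivity) (by positivity)]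
  have h1 : (1:ℝ) ≤ a * b := by nlinarith
  nlinarith [mul_nonneg (sub_nonneg.2 hab) (sub_nonneg.2 h1)]

lemma revYoung' {t u : ℝ} (ht0 : 0 ≤ t) (ht : t ≤ 1/2) (hu : 0 < u) :
    (1-t) + t*u^2 ≤
      kantorovich u ^ (-(min (2*t) (1-2*t))) * u^(2*t) + (1-t)*(1-u)^2 := by
  set m := min (2*t) (1-2*t) with hm
  have hcore := core_ineq (s := 2*t) (by linarith) (by linarith) hu
  have hK : (4*u/(u+1)^2) ^ min (2*t) (1-2*t) = kantorovich u ^ (-m) := by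
    rw [hm, Real.rpow_neg (kantorovich_pos hu).le, ← Real.inv_rpow (kantorovich_pos hu).le]
    congr 1
    unfold kantorovich
    rw [inv_div]
  rw [show (1 - 2*t : ℝ) = 1 - 2*t from rfl] at hcore
  rw [hK] at hcore
  have hmul := mul_le_mul_of_nonneg_right hcore (Real.rpow_pos_of_pos hu (2*t)).le
  have hl : u ^ (1-2*t) * ((2 - 2*t) - (1 - 2*t) * u) * u ^ (2*t)
      = u * ((2 - 2*t) - (1 - 2*t) * u) := by
    rw [show u ^ (1-2*t) * ((2 - 2*t) - (1 - 2*t) * u) * u ^ (2*t)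
        = (u ^ (1-2*t) * u ^ (2*t)) * ((2 - 2*t) - (1 - 2*t) * u) from by ring,
      ← Real.rpow_add hu]
    norm_num
  rw [hl] at hmul
  nlinarith [hmul]

lemma revYoungGen {t u : ℝ} (ht0 : 0 ≤ t) (ht1 : t ≤ 1) (hu : 0 < u) :
    (1-t) + t*u^2 ≤
      kantorovich u ^ (-(min (2 * min t (1-t)) (1 - 2 * min t (1-t)))) * u^(2*t)
        + max t (1-t) * (1-u)^2 := by
  rcases le_total t (1/2) with ht | ht
  · rw [show min t (1-t) = t from min_eq_left (by linarith),
      show max t (1-t) = 1 - t from max_eq_right (by linarith)]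
    exact revYoung' ht0 ht hu
  · rw [show min t (1-t) = 1 - t from min_eq_right (by linarith),
      show max t (1-t) = t from max_eq_left (by linarith)]
    have hui : 0 < u⁻¹ := by positivity
    have h0 := revYoung' (t := 1 - t) (by linarith) (by linarith) hui
    rw [kantorovich_inv hu] at h0
    have hmul := mul_le_mul_of_nonneg_right h0 (by positivity : (0:ℝ) ≤ u^2)
    have hL : ((1-(1-t)) + (1-t)*(u⁻¹)^2) * u^2 = (1-t) + t*u^2 := by
      field_simp; ring
    have hpow : (u⁻¹) ^ (2*(1-t)) * u^2 = u ^ (2*t) := by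
      rw [Real.inv_rpow hu.le, ← Real.rpow_neg hu.le, ← Real.rpow_natCast u 2,
        ← Real.rpow_add hu]
      norm_num
      ring_nf
    have h4 : ((1:ℝ)-u⁻¹)^2*u^2 = (1-u)^2 := by
      field_simp; ring
    have h3 : ((1:ℝ)-(1-t))*(1-u⁻¹)^2*u^2 = t*(1-u)^2 := by
      rw [mul_assoc, h4]; ring
    rw [hL, add_mul, mul_assoc, hpow, h3] at hmul
    exact hmul

lemma scalar_main {ν κ h r R r' : ℝ} (hν : 0 ≤ ν) (hνκ : ν < κ) (hκ : κ ≤ 1)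
    (hh : 1 < h)
    (hr : r = min (ν/κ) (1 - ν/κ)) (hR : R = max (ν/κ) (1 - ν/κ))
    (hr' : r' = min (2*r) (1-2*r))
    {x : ℝ} (hx : h ≤ x) :
    ((1+x)/2) - (ν/κ) * ((1+x)/2 - (x^κ + x^(1-κ))/2)
      ≤ kantorovich (h ^ (κ/2)) ^ (-r') * ((x^ν + x^(1-ν))/2)
        + R * ((x^κ + x^(1-κ))/2 + (1+x)/2 - 2*((x^(κ/2) + x^(1-κ/2))/2)) := by
  have hκ0 : 0 < κ := lt_of_le_of_lt hν hνκ
  set t := ν/κ with htdef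
  have ht0 : 0 ≤ t := div_nonneg hν hκ0.le
  have ht1 : t ≤ 1 := by
    rw [htdef, div_le_one hκ0]; exact hνκ.le
  have hx1 : (1:ℝ) < x := lt_of_lt_of_le hh hx
  have hx0 : (0:ℝ) < x := by linarith
  have hh0 : (0:ℝ) < h := by linarith
  have hrt : r = min t (1-t) := hr
  have hRt : R = max t (1-t) := hR
  have hr'0 : 0 ≤ r' := by
    have h1 : 0 ≤ r := by rw [hrt]; exact le_min ht0 (by linarith)
    have h2 : r ≤ t ⊔ (1-t) := by rw [hrt]; exact (min_le_left _ _).trans (le_max_left _ _)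
    have h3 : 2*r ≤ 1 := by
      rw [hrt]
      rcases le_total t (1-t) with h | h
      · rw [min_eq_left h]; linarith
      · rw [min_eq_right h]; linarith
    rw [hr']; exact le_min (by linarith) (by linarith)
  -- abbreviations
  set Xh := x ^ (κ/2) with hXh
  have hXh0 : 0 < Xh := Real.rpow_pos_of_pos hx0 _
  set cx := kantorovich Xh ^ (-r') with hcx
  set ch := kantorovich (h ^ (κ/2)) ^ (-r') with hch
  -- ineq 1 : pair (1, x^κ)
  have i1 := revYoungGen ht0 ht1 hXh0
  rw [← hrt, ← hr'] at i1
  have e1 : Xh^2 = x^κ := by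
    rw [hXh, pow_two, ← Real.rpow_add hx0]; ring_nf
  have hts : κ * t = ν := by rw [htdef]; field_simp
  have e2 : Xh ^ (2*t) = x^ν := by
    rw [hXh, ← Real.rpow_mul hx0.le]
    congr 1
    linear_combination hts
  have e3 : (1-Xh)^2 = 1 - 2*Xh + x^κ := by rw [← e1]; ring
  rw [e1, e2, e3, ← hcx, ← hRt] at i1
  -- ineq 2 : pair (x, x^(1-κ))
  set Xi := x ^ (-(κ/2)) with hXi
  have hXi0 : 0 < Xi := Real.rpow_pos_of_pos hx0 _
  have i2 := revYoungGen ht0 ht1 hXi0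
  rw [← hrt, ← hr'] at i2
  have eK : kantorovich Xi = kantorovich Xh := by
    rw [hXi, Real.rpow_neg hx0.le, ← hXh, kantorovich_inv hXh0]
  rw [eK, ← hcx, ← hRt] at i2
  have i2' := mul_le_mul_of_nonneg_right i2 hx0.le
  have mulx : ∀ a : ℝ, x ^ a * x = x ^ (a + 1) := by
    intro a
    rw [show x ^ a * x = x ^ a * x ^ (1:ℝ) from by rw [Real.rpow_one],
      ← Real.rpow_add hx0]
  have e4 : Xi^2 * x = x^(1-κ) := by
    rw [hXi, pow_two, ← Real.rpow_add hx0, mulx]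
    congr 1; ring
  have e5 : Xi^(2*t) * x = x^(1-ν) := by
    rw [hXi, ← Real.rpow_mul hx0.le, mulx]
    congr 1
    linear_combination -hts
  have e6 : (1-Xi)^2 * x = x - 2*(x^(1-κ/2)) + x^(1-κ) := by
    have eXix : Xi * x = x^(1-κ/2) := by rw [hXi, mulx]; congr 1; ring
    rw [show (1-Xi)^2*x = x - 2*(Xi*x) + Xi^2*x from by ring, eXix, e4]
  rw [show (1-t+t*Xi^2)*x = (1-t)*x + t*(Xi^2*x) from by ring, e4,
    show (cx*Xi^(2*t) + R*(1-Xi)^2)*x = cx*(Xi^(2*t)*x) + R*((1-Xi)^2*x) from by ring,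
    e5, e6] at i2'
  -- replace cx by ch
  have h1 : (1:ℝ) ≤ h^(κ/2) := by
    rw [show (1:ℝ) = 1^(κ/2) from (Real.one_rpow _).symm]
    exact Real.rpow_le_rpow zero_le_one hh.le (by positivity)
  have h2 : h^(κ/2) ≤ Xh := by
    rw [hXh]; exact Real.rpow_le_rpow hh0.le hx (by positivity)
  have hKh0 : (0:ℝ) < kantorovich (h^(κ/2)) := kantorovich_pos (by linarith)
  have hc : cx ≤ ch := by
    rw [hcx, hch, Real.rpow_neg (kantorovich_pos hXh0).le, Real.rpow_neg hKh0.le]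
    exact inv_anti₀ (Real.rpow_pos_of_pos hKh0 _)
      (Real.rpow_le_rpow hKh0.le (kantorovich_mono h1 h2) hr'0)
  have hm1 : cx * x^ν ≤ ch * x^ν :=
    mul_le_mul_of_nonneg_right hc (Real.rpow_pos_of_pos hx0 _).le
  have hm2 : cx * x^(1-ν) ≤ ch * x^(1-ν) :=
    mul_le_mul_of_nonneg_right hc (Real.rpow_pos_of_pos hx0 _).le
  linarith [i1, i2', hm1, hm2]

end Scalar

variable {n : ℕ}

lemma dot_self_eigvec {A : Matrix (Fin n) (Fin n) ℂ} (hA : A.IsHermitian) (i : Fin n) :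
    dotProduct (star ((WithLp.equiv 2 _) (hA.eigenvectorBasis i)))
      ((WithLp.equiv 2 _) (hA.eigenvectorBasis i)) = 1 := by
  rw [WithLp.equiv_apply, dotProduct_comm, ← EuclideanSpace.inner_eq_star_dotProduct]
  have h1 : ‖hA.eigenvectorBasis i‖ = 1 := hA.eigenvectorBasis.orthonormal.1 i
  rw [inner_self_eq_norm_sq_to_K, h1]
  norm_num

lemma ev_le {A : Matrix (Fin n) (Fin n) ℂ} (hA : A.IsHermitian) {c : ℝ}
    (hc : (((c:ℂ)) • (1 : Matrix (Fin n) (Fin n) ℂ) - A).PosSemidef) (i : Fin n) :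
    hA.eigenvalues i ≤ c := by
  have h1 := hc.re_dotProduct_nonneg ((WithLp.equiv 2 _) (hA.eigenvectorBasis i))
  rw [Matrix.sub_mulVec, dotProduct_sub, map_sub] at h1
  have h2 : (((c:ℂ)) • (1 : Matrix (Fin n) (Fin n) ℂ)).mulVec
      ((WithLp.equiv 2 _) (hA.eigenvectorBasis i))
      = (c:ℂ) • ((WithLp.equiv 2 _) (hA.eigenvectorBasis i)) := by
    rw [Matrix.smul_mulVec, Matrix.one_mulVec]
  rw [h2, dotProduct_smul, dot_self_eigvec hA i] at h1
  rw [WithLp.equiv_apply, ← hA.eigenvalues_eq i] at h1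
  simpa using h1

lemma le_ev {A : Matrix (Fin n) (Fin n) ℂ} (hA : A.IsHermitian) {c : ℝ}
    (hc : (A - ((c:ℂ)) • (1 : Matrix (Fin n) (Fin n) ℂ)).PosSemidef) (i : Fin n) :
    c ≤ hA.eigenvalues i := by
  have h1 := hc.re_dotProduct_nonneg ((WithLp.equiv 2 _) (hA.eigenvectorBasis i))
  rw [Matrix.sub_mulVec, dotProduct_sub, map_sub] at h1
  have h2 : (((c:ℂ)) • (1 : Matrix (Fin n) (Fin n) ℂ)).mulVec
      ((WithLp.equiv 2 _) (hA.eigenvectorBasis i))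
      = (c:ℂ) • ((WithLp.equiv 2 _) (hA.eigenvectorBasis i)) := by
    rw [Matrix.smul_mulVec, Matrix.one_mulVec]
  rw [h2, dotProduct_smul, dot_self_eigvec hA i] at h1
  rw [WithLp.equiv_apply, ← hA.eigenvalues_eq i] at h1
  simpa using h1


lemma cfc_rep {A : Matrix (Fin n) (Fin n) ℂ} (hA : A.IsHermitian) (f : ℝ → ℝ) :
    cfc f A = (hA.eigenvectorUnitary : Matrix (Fin n) (Fin n) ℂ)
      * Matrix.diagonal (fun i => ((f (hA.eigenvalues i) : ℝ) : ℂ))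
      * star (hA.eigenvectorUnitary : Matrix (Fin n) (Fin n) ℂ) := by
  rw [hA.cfc_eq]
  rfl

lemma mpow_rep {A : Matrix (Fin n) (Fin n) ℂ} (hA : A.IsHermitian) (α : ℝ) :
    mpow A α = (hA.eigenvectorUnitary : Matrix (Fin n) (Fin n) ℂ)
      * Matrix.diagonal (fun i => ((hA.eigenvalues i ^ α : ℝ) : ℂ))
      * star (hA.eigenvectorUnitary : Matrix (Fin n) (Fin n) ℂ) :=
  cfc_rep hA (fun x => x ^ α)

lemma herm_conj_diag (U : Matrix (Fin n) (Fin n) ℂ) (g : Fin n → ℝ) :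
    (U * Matrix.diagonal (fun i => ((g i : ℝ) : ℂ)) * star U).IsHermitian := by
  unfold Matrix.IsHermitian
  simp only [Matrix.star_eq_conjTranspose, Matrix.conjTranspose_mul,
    Matrix.conjTranspose_conjTranspose, Matrix.diagonal_conjTranspose]
  have : (star fun i => ((g i : ℝ) : ℂ)) = fun i => ((g i : ℝ) : ℂ) := by
    funext i
    simp [Complex.conj_ofReal]
  rw [this, mul_assoc]

lemma conj_mul {U D1 D2 : Matrix (Fin n) (Fin n) ℂ} (hU : star U * U = 1) :
    (U * D1 * star U) * (U * D2 * star U) = U * (D1 * D2) * star U := by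
  simp only [mul_assoc]
  rw [← mul_assoc (star U) U, hU, one_mul]

lemma smul_one_diag (c : ℂ) :
    c • (1 : Matrix (Fin n) (Fin n) ℂ) = Matrix.diagonal (fun _ => c) := by
  rw [Matrix.smul_eq_diagonal_mul, mul_one]


lemma conj_add (P U D1 D2 : Matrix (Fin n) (Fin n) ℂ) :
    P * (U * D1 * star U) * P + P * (U * D2 * star U) * P
      = P * (U * (D1 + D2) * star U) * P := by
  simp [Matrix.mul_add, Matrix.add_mul]

lemma conj_sub (P U D1 D2 : Matrix (Fin n) (Fin n) ℂ) :
    P * (U * D1 * star U) * P - P * (U * D2 * star U) * P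
      = P * (U * (D1 - D2) * star U) * P := by
  simp [Matrix.mul_sub, Matrix.sub_mul]

lemma conj_smul (c : ℝ) (P U D : Matrix (Fin n) (Fin n) ℂ) :
    c • (P * (U * D * star U) * P) = P * (U * (c • D) * star U) * P := by
  simp [smul_mul_assoc, mul_smul_comm]

lemma smul_one_conj {U : Matrix (Fin n) (Fin n) ℂ} (hU : U * star U = 1) (c : ℂ) :
    c • (1 : Matrix (Fin n) (Fin n) ℂ) = U * (c • 1) * star U := by
  rw [mul_smul_comm, smul_mul_assoc, mul_one, hU]

lemma conj_sub2 (U D1 D2 : Matrix (Fin n) (Fin n) ℂ) :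
    U * D1 * star U - U * D2 * star U = U * (D1 - D2) * star U := by
  simp [Matrix.mul_sub, Matrix.sub_mul]

lemma psd_conj (P U : Matrix (Fin n) (Fin n) ℂ) (hP : P.IsHermitian)
    (D : Matrix (Fin n) (Fin n) ℂ) (w : Fin n → ℝ)
    (hD : D = Matrix.diagonal (fun i => ((w i : ℝ) : ℂ))) (hw : ∀ i, 0 ≤ w i) :
    (P * (U * D * star U) * P).PosSemidef := by
  subst hD
  have h1 : P * (U * Matrix.diagonal (fun i => ((w i : ℝ) : ℂ)) * star U) * P
      = (P * U) * Matrix.diagonal (fun i => ((w i : ℝ) : ℂ)) * (P * U).conjTranspose := by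
    have h2 : (P * U).conjTranspose = star U * P := by
      rw [Matrix.conjTranspose_mul, hP.eq, ← Matrix.star_eq_conjTranspose]
    rw [h2]
    simp only [mul_assoc]
  rw [h1]
  exact (Matrix.posSemidef_diagonal_iff.mpr
    (fun i => Complex.zero_le_real.mpr (hw i))).mul_mul_conjTranspose_same (P * U)


end Aux


theorem stmt_10 {n : ℕ} (T S : Matrix (Fin n) (Fin n) ℂ)
    (hT : T.PosDef) (hS : S.PosDef)
    (m m' M' M : ℝ) (hm : 0 < m) (hmm' : m ≤ m') (hm'M' : m' < M') (hM'M : M' ≤ M)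
    (hT1 : LoewnerLE ((m : ℂ) • (1 : Matrix (Fin n) (Fin n) ℂ)) T)
    (hT2 : LoewnerLE T ((m' : ℂ) • (1 : Matrix (Fin n) (Fin n) ℂ)))
    (hS1 : LoewnerLE ((M' : ℂ) • (1 : Matrix (Fin n) (Fin n) ℂ)) S)
    (hS2 : LoewnerLE S ((M : ℂ) • (1 : Matrix (Fin n) (Fin n) ℂ)))
    (ν κ : ℝ) (hν : 0 ≤ ν) (hνκ : ν < κ) (hκ : κ ≤ 1)
    (h r R r' : ℝ) (hh : h = M' / m')
    (hr : r = min (ν / κ) (1 - ν / κ)) (hR : R = max (ν / κ) (1 - ν / κ))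
    (hr' : r' = min (2 * r) (1 - 2 * r)) :
    LoewnerLE
      (opHeinz 0 T S - (ν / κ) • (opHeinz 0 T S - opHeinz κ T S))
      ((kantorovich (h ^ (κ / 2)) ^ (-r')) • opHeinz ν T S
        + R • (opHeinz κ T S + opHeinz 0 T S - (2 : ℝ) • opHeinz (κ / 2) T S)) := by

  have hκ0 : 0 < κ := lt_of_le_of_lt hν hνκ
  have hm'0 : 0 < m' := lt_of_lt_of_le hm hmm'
  have hh1 : 1 < h := by rw [hh]; exact (one_lt_div hm'0).mpr hm'M'
  have hTH : T.IsHermitian := hT.1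
  set ET : Fin n → ℝ := hTH.eigenvalues with hETdef
  set UT : Matrix (Fin n) (Fin n) ℂ := (hTH.eigenvectorUnitary : Matrix (Fin n) (Fin n) ℂ)
    with hUTdef
  have hUT1 : UT * star UT = 1 := (Matrix.mem_unitaryGroup_iff).mp hTH.eigenvectorUnitary.2
  have hUT2 : star UT * UT = 1 := (Matrix.mem_unitaryGroup_iff').mp hTH.eigenvectorUnitary.2
  have hET0 : ∀ i, 0 < ET i := fun i => hT.eigenvalues_pos i
  have hETm' : ∀ i, ET i ≤ m' := fun i => Aux.ev_le hTH hT2 i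
  set Q : Matrix (Fin n) (Fin n) ℂ := mpow T (-(1 / 2)) with hQdef
  set P : Matrix (Fin n) (Fin n) ℂ := mpow T (1 / 2) with hPdef
  have hQrep : Q = UT * Matrix.diagonal (fun i => ((ET i ^ (-(1/2):ℝ) : ℝ) : ℂ)) * star UT :=
    Aux.mpow_rep hTH _
  have hPrep : P = UT * Matrix.diagonal (fun i => ((ET i ^ ((1:ℝ)/2) : ℝ) : ℂ)) * star UT :=
    Aux.mpow_rep hTH _
  have hP : P.IsHermitian := by rw [hPrep]; exact Aux.herm_conj_diag _ _
  have hQ : Q.IsHermitian := by rw [hQrep]; exact Aux.herm_conj_diag _ _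
  -- bound on Q * Q
  have hQQrep : Q * Q - ((m'⁻¹ : ℝ) : ℂ) • 1
      = UT * Matrix.diagonal
          (fun i => (((ET i ^ (-(1/2):ℝ)) * (ET i ^ (-(1/2):ℝ)) - m'⁻¹ : ℝ) : ℂ))
        * star UT := by
    rw [hQrep, Aux.conj_mul hUT2, Matrix.diagonal_mul_diagonal,
      Aux.smul_one_conj hUT1 ((m'⁻¹ : ℝ) : ℂ), Aux.smul_one_diag,
      Aux.conj_sub2, Matrix.diagonal_sub]
    congr 2
    funext i
    push_cast
    ring
  have hQQ : (Q * Q - ((m'⁻¹ : ℝ) : ℂ) • 1).PosSemidef := by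
    rw [hQQrep, Matrix.star_eq_conjTranspose]
    apply Matrix.PosSemidef.mul_mul_conjTranspose_same
    refine Matrix.posSemidef_diagonal_iff.mpr fun i => ?_
    have hreal : m'⁻¹ ≤ ET i ^ (-(1/2):ℝ) * ET i ^ (-(1/2):ℝ) := by
      rw [← Real.rpow_add (hET0 i),
        show (-(1/2) + -(1/2) : ℝ) = -1 from by norm_num, Real.rpow_neg_one]
      exact inv_anti₀ (hET0 i) (hETm' i)
    exact Complex.zero_le_real.mpr (by linarith)
  -- the matrix X
  set X : Matrix (Fin n) (Fin n) ℂ := Q * S * Q with hXdef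
  have hX : X.IsHermitian := by
    show X.conjTranspose = X
    rw [hXdef]
    simp only [Matrix.conjTranspose_mul, hQ.eq, hS.1.eq, mul_assoc]
  have hXpsd : (X - ((h : ℝ) : ℂ) • 1).PosSemidef := by
    refine Matrix.PosSemidef.of_dotProduct_mulVec_nonneg ?_ ?_
    · apply hX.sub
      show (((h:ℝ):ℂ) • (1 : Matrix (Fin n) (Fin n) ℂ)).conjTranspose = _
      rw [Matrix.conjTranspose_smul, Matrix.conjTranspose_one]
      simp [Complex.conj_ofReal]
    · intro v
      have hv1 : (X - ((h:ℝ):ℂ) • 1).mulVec v = X.mulVec v - ((h:ℝ):ℂ) • v := by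
        rw [Matrix.sub_mulVec, Matrix.smul_mulVec, Matrix.one_mulVec]
      rw [hv1, dotProduct_sub, dotProduct_smul, smul_eq_mul]
      set w := Q.mulVec v with hwdef
      have hform : dotProduct (star v) (X.mulVec v)
          = dotProduct (star w) (S.mulVec w) := by
        rw [hXdef,
          show (Q*S*Q).mulVec v = Q.mulVec (S.mulVec (Q.mulVec v)) from by
            rw [← Matrix.mulVec_mulVec, ← Matrix.mulVec_mulVec],
          Matrix.dotProduct_mulVec (star v) Q, hwdef, Matrix.star_mulVec, hQ.eq]
      have hSw : (M':ℂ) * dotProduct (star w) w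
          ≤ dotProduct (star w) (S.mulVec w) := by
        have h0 := (show (S - ((M':ℝ):ℂ) • 1).PosSemidef from hS1).dotProduct_mulVec_nonneg w
        rw [Matrix.sub_mulVec, dotProduct_sub, Matrix.smul_mulVec,
          Matrix.one_mulVec, dotProduct_smul, smul_eq_mul] at h0
        exact le_of_sub_nonneg h0
      have hQv : ((m'⁻¹:ℝ):ℂ) * dotProduct (star v) v
          ≤ dotProduct (star v) ((Q*Q).mulVec v) := by
        have h0 := hQQ.dotProduct_mulVec_nonneg v
        rw [Matrix.sub_mulVec, dotProduct_sub, Matrix.smul_mulVec,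
          Matrix.one_mulVec, dotProduct_smul, smul_eq_mul] at h0
        exact le_of_sub_nonneg h0
      have hww : dotProduct (star w) w
          = dotProduct (star v) ((Q*Q).mulVec v) := by
        rw [hwdef, Matrix.star_mulVec, hQ.eq, ← Matrix.mulVec_mulVec,
          Matrix.dotProduct_mulVec (star v) Q]
      have hM'0 : (0:ℂ) ≤ (M':ℂ) := by
        rw [show ((M':ℝ):ℂ) = ((M':ℝ):ℂ) from rfl]
        exact Complex.zero_le_real.mpr (by linarith)
      have hcomb : ((h:ℝ):ℂ) * dotProduct (star v) v
          ≤ dotProduct (star v) (X.mulVec v) := by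
        have e1 : ((h:ℝ):ℂ) = (M':ℂ) * ((m'⁻¹:ℝ):ℂ) := by rw [hh]; push_cast; ring
        calc ((h:ℝ):ℂ) * dotProduct (star v) v
            = (M':ℂ) * (((m'⁻¹:ℝ):ℂ) * dotProduct (star v) v) := by
              rw [e1, mul_assoc]
          _ ≤ (M':ℂ) * dotProduct (star v) ((Q*Q).mulVec v) :=
              mul_le_mul_of_nonneg_left hQv hM'0
          _ = (M':ℂ) * dotProduct (star w) w := by rw [hww]
          _ ≤ dotProduct (star w) (S.mulVec w) := hSw
          _ = dotProduct (star v) (X.mulVec v) := hform.symm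
      exact sub_nonneg.mpr hcomb
  set EX : Fin n → ℝ := hX.eigenvalues with hEXdef
  have hEXh : ∀ i, h ≤ EX i := fun i => Aux.le_ev hX hXpsd i
  set UX : Matrix (Fin n) (Fin n) ℂ := (hX.eigenvectorUnitary : Matrix (Fin n) (Fin n) ℂ)
    with hUXdef
  have hgeom : ∀ α : ℝ, geomMean T S α
      = P * (UX * (Matrix.diagonal fun i => ((EX i ^ α : ℝ) : ℂ)) * star UX) * P := by
    intro α
    simp only [geomMean]
    rw [← hQdef, ← hPdef, ← hXdef, Aux.mpow_rep hX α, ← hUXdef, ← hEXdef]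
  have hop : ∀ α : ℝ, opHeinz α T S
      = P * (UX * ((2⁻¹:ℝ) • ((Matrix.diagonal fun i => ((EX i ^ α : ℝ) : ℂ))
        + (Matrix.diagonal fun i => ((EX i ^ (1-α) : ℝ) : ℂ)))) * star UX) * P := by
    intro α
    simp only [opHeinz]
    rw [hgeom α, hgeom (1-α), Aux.conj_add, Aux.conj_smul]
  show ((kantorovich (h ^ (κ / 2)) ^ (-r')) • opHeinz ν T S
        + R • (opHeinz κ T S + opHeinz 0 T S - (2 : ℝ) • opHeinz (κ / 2) T S)
      - (opHeinz 0 T S - (ν / κ) • (opHeinz 0 T S - opHeinz κ T S))).PosSemidef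
  rw [hop ν, hop κ, hop 0, hop (κ/2)]
  simp only [Aux.conj_smul, Aux.conj_add, Aux.conj_sub]
  apply Aux.psd_conj P UX hP _
    (fun i => (kantorovich (h ^ (κ / 2)) ^ (-r') * ((EX i^ν + EX i^(1-ν))/2)
        + R * ((EX i^κ + EX i^(1-κ))/2 + (EX i^(0:ℝ) + EX i^(1-(0:ℝ)))/2
          - 2*((EX i^(κ/2) + EX i^(1-κ/2))/2)))
      - ((EX i^(0:ℝ) + EX i^(1-(0:ℝ)))/2
        - (ν / κ) * ((EX i^(0:ℝ) + EX i^(1-(0:ℝ)))/2 - (EX i^κ + EX i^(1-κ))/2)))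
  · ext i j
    by_cases hij : i = j
    · subst hij
      simp only [Matrix.sub_apply, Matrix.add_apply, Matrix.smul_apply,
        Matrix.diagonal_apply_eq, Complex.real_smul]
      push_cast
      ring
    · simp only [Matrix.sub_apply, Matrix.add_apply, Matrix.smul_apply,
        Matrix.diagonal_apply_ne _ hij, Complex.real_smul]
      push_cast
      ring
  · intro i
    have hx := hEXh i
    have h1 : (0:ℝ) < EX i := lt_of_lt_of_le (by linarith) hx
    have e0 : EX i ^ (0:ℝ) = 1 := Real.rpow_zero _
    have e1 : EX i ^ (1-(0:ℝ)) = EX i := by norm_num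
    rw [e0, e1]
    have := Aux.scalar_main hν hνκ hκ hh1 hr hR hr' hx
    linarith
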